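/- For every pooled incentive P ≥ 0: if (1, 1) is a Nash equilibrium of the effort game under Equal Allocation, then (1, 1) is a Nash equilibrium of the effort game under Output Agreement; and if (1, 1) is a Nash equilibrium of the effort game under Output Agreement, then (1, 1) is a Nash equilibrium of the effort game under the Shapley Value mechanism. (SV incentivizes joint effort exertion at least as well as OA, which in turn does so at least as well as EA.) -/
import Mathlib


noncomputable section

/-- Team solution accuracy as a function of the effort profile `(eH, eL) ∈ {0,1}²`. -/
def pT (a : ℝ) (eH eL : ℕ) : ℝ :=
  if eH + eL = 0 then 1 / 2 else if eH + eL = 1 then (2 * a + 1) / 4 else a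

/-- Each member's share of the incentive pool under Equal Allocation. -/
def pEA (_eH _eL : ℕ) : ℝ := 1 / 2

/-- Each member's expected share of the incentive pool under Output Agreement. -/
def pOA (a : ℝ) (eH eL : ℕ) : ℝ :=
  if eH = 1 ∧ eL = 1 then (2 * a ^ 2 - 2 * a + 1) / 2 else 1 / 4

/-- Member H's share of the incentive pool under the Shapley Value mechanism. -/
def pSVH (eH eL : ℕ) : ℝ :=
  if eH = 1 ∧ eL = 0 then 1 else if eH = 0 ∧ eL = 1 then 0 else 1 / 2

/-- Member L's share of the incentive pool under the Shapley Value mechanism. -/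
def pSVL (eH eL : ℕ) : ℝ := 1 - pSVH eH eL

/-- Nash equilibrium of the effort game with share functions `(pH, pL)` and pooled
incentive `P`: no member can strictly increase her payoff
`u_m = V_m·P_T(e) + p_m(e)·P − c·e_m` by unilaterally changing her effort in `{0,1}`. -/
def isNE (pH pL : ℕ → ℕ → ℝ) (a c P VH VL : ℝ) (eH eL : ℕ) : Prop :=
  (∀ e', e' = 0 ∨ e' = 1 →
    VH * pT a e' eL + pH e' eL * P - c * e' ≤
      VH * pT a eH eL + pH eH eL * P - c * eH) ∧
  (∀ e', e' = 0 ∨ e' = 1 →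
    VL * pT a eH e' + pL eH e' * P - c * e' ≤
      VL * pT a eH eL + pL eH eL * P - c * eL)

/-- for every pooled incentive `P ≥ 0`, if `(1,1)` is a Nash equilibrium
of the effort game under Equal Allocation then it is one under Output Agreement, and if
it is a Nash equilibrium under Output Agreement then it is one under the Shapley Value
mechanism. -/
theorem joint_effort_NE_monotone_across_mechanisms
    (a c P VH VL : ℝ)
    (ha : 1 / 2 < a ∧ a ≤ 1) (hc : 0 < c) (hP : 0 ≤ P)
    (hVL : 0 < VL) (hV : VL < VH) :
    (isNE pEA pEA a c P VH VL 1 1 → isNE (pOA a) (pOA a) a c P VH VL 1 1) ∧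
    (isNE (pOA a) (pOA a) a c P VH VL 1 1 → isNE pSVH pSVL a c P VH VL 1 1) := by
  obtain ⟨ha1, ha2⟩ := ha
  constructor
  · rintro ⟨hH, hL⟩
    have hH0 := hH 0 (Or.inl rfl)
    have hL0 := hL 0 (Or.inl rfl)
    constructor
    · rintro e' (rfl | rfl)
      · simp only [pT, pEA, pOA] at *
        norm_num at *
        nlinarith [sq_nonneg (2 * a - 1)]
      · simp
    · rintro e' (rfl | rfl)
      · simp only [pT, pEA, pOA] at *
        norm_num at *
        nlinarith [sq_nonneg (2 * a - 1)]
      · simp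
  · rintro ⟨hH, hL⟩
    have hH0 := hH 0 (Or.inl rfl)
    have hL0 := hL 0 (Or.inl rfl)
    constructor
    · rintro e' (rfl | rfl)
      · simp only [pT, pOA, pSVH] at *
        norm_num at *
        nlinarith [mul_nonneg hP (mul_nonneg (by linarith : (0:ℝ) ≤ a) (by linarith : (0:ℝ) ≤ 1 - a))]
      · simp
    · rintro e' (rfl | rfl)
      · simp only [pT, pOA, pSVH, pSVL] at *
        norm_num at *
        nlinarith [mul_nonneg hP (mul_nonneg (by linarith : (0:ℝ) ≤ a) (by linarith : (0:ℝ) ≤ 1 - a))]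
      · simp
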